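/- Let c be real with -1 ≤ c < 1. Then the iterated integral Z_c(2) := ∫∫_{0<s<t<1} [(1-c)/((1-s)(1-cs))] · (1/t) ds dt converges and equals Li₂(1) - Li₂(c) = π²/6 - Li₂(c), where Li₂(x) = Σ_{n≥1} xⁿ/n² is the dilogarithm. -/

import Mathlib

open MeasureTheory Set ENNReal

-- series identity
lemma series_id (c s : ℝ) (hcabs : |c| ≤ 1) (hs0 : 0 < s) (hs1 : s < 1) :
    ∑' n : ℕ, (1 - c ^ (n + 1)) * s ^ n = (1 - c) / ((1 - s) * (1 - c * s)) := by
  have hsabs : |s| < 1 := by rw [abs_of_pos hs0]; exact hs1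
  have hcs : |c * s| < 1 := by
    rw [abs_mul]
    calc |c| * |s| ≤ 1 * |s| := by gcongr
    _ = |s| := one_mul _
    _ < 1 := hsabs
  have h1 : Summable (fun n : ℕ => s ^ n) :=
    summable_geometric_of_norm_lt_one (by rwa [Real.norm_eq_abs])
  have h2 : Summable (fun n : ℕ => c * (c * s) ^ n) :=
    (summable_geometric_of_norm_lt_one (by rwa [Real.norm_eq_abs])).mul_left c
  have hterm : ∀ n : ℕ, (1 - c ^ (n + 1)) * s ^ n = s ^ n - c * (c * s) ^ n := by
    intro n; rw [mul_pow]; ring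
  have hne1 : (1 : ℝ) - s ≠ 0 := by linarith
  have hne2 : (1 : ℝ) - c * s ≠ 0 := by
    have : c * s < 1 := lt_of_le_of_lt (le_abs_self _) hcs
    linarith
  calc ∑' n : ℕ, (1 - c ^ (n + 1)) * s ^ n
      = ∑' n : ℕ, (s ^ n - c * (c * s) ^ n) := tsum_congr hterm
    _ = (∑' n : ℕ, s ^ n) - ∑' n : ℕ, c * (c * s) ^ n := Summable.tsum_sub h1 h2
    _ = (1 - s)⁻¹ - c * (1 - c * s)⁻¹ := by
        rw [tsum_geometric_of_norm_lt_one (by rwa [Real.norm_eq_abs]),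
          tsum_mul_left, tsum_geometric_of_norm_lt_one (by rwa [Real.norm_eq_abs])]
    _ = (1 - c) / ((1 - s) * (1 - c * s)) := by
        rw [eq_div_iff (mul_ne_zero hne1 hne2)]
        have hA := mul_inv_cancel₀ hne1
        have hB := mul_inv_cancel₀ hne2
        linear_combination (1 - c * s) * hA - c * (1 - s) * hB

-- per-term integral
lemma term_int (a : ℝ) (ha : 0 ≤ a) (n : ℕ) :
    ∫⁻ p in {p : ℝ × ℝ | 0 < p.1 ∧ p.1 < p.2 ∧ p.2 < 1},
      ENNReal.ofReal (a * p.1 ^ n / p.2) = ENNReal.ofReal (a / ((n : ℝ) + 1) ^ 2) := by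
  set S : Set (ℝ × ℝ) := {p : ℝ × ℝ | 0 < p.1 ∧ p.1 < p.2 ∧ p.2 < 1} with hSdef
  have hS : MeasurableSet S := by
    apply MeasurableSet.inter (measurableSet_lt measurable_const measurable_fst)
    exact (measurableSet_lt measurable_fst measurable_snd).inter
      (measurableSet_lt measurable_snd measurable_const)
  set H : ℝ × ℝ → ℝ≥0∞ := fun p => ENNReal.ofReal (a * p.1 ^ n / p.2) with hHdef
  have hHm : Measurable H :=
    (((measurable_fst.pow_const n).const_mul a).div measurable_snd).ennreal_ofReal
  have hind : ∀ q : ℝ × ℝ, S.indicator H q =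
      (Ioo (0:ℝ) 1).indicator
        (fun t => (Ioo (0:ℝ) t).indicator (fun s => H (s, t)) q.1) q.2 := by
    rintro ⟨s, t⟩
    by_cases h1 : (s, t) ∈ S
    · rw [Set.indicator_of_mem h1]
      obtain ⟨hs0, hst, ht1⟩ := h1
      rw [Set.indicator_of_mem (Set.mem_Ioo.mpr ⟨hs0.trans hst, ht1⟩),
        Set.indicator_of_mem (Set.mem_Ioo.mpr ⟨hs0, hst⟩)]
    · rw [Set.indicator_of_notMem h1]
      by_cases h2 : t ∈ Ioo (0:ℝ) 1
      · rw [Set.indicator_of_mem h2, Set.indicator_of_notMem]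
        intro hs
        exact h1 ⟨hs.1, hs.2, h2.2⟩
      · rw [Set.indicator_of_notMem h2]
  rw [← lintegral_indicator hS H]
  rw [Measure.volume_eq_prod, lintegral_prod_symm _ ((hHm.indicator hS).aemeasurable)]
  have step1 : ∀ t : ℝ, ∫⁻ s, S.indicator H (s, t) =
      (Ioo (0:ℝ) 1).indicator (fun t => ∫⁻ s in Ioo (0:ℝ) t, H (s, t)) t := by
    intro t
    by_cases h2 : t ∈ Ioo (0:ℝ) 1
    · simp only [hind, Set.indicator_of_mem h2]
      rw [← lintegral_indicator measurableSet_Ioo]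
    · simp only [hind, Set.indicator_of_notMem h2, lintegral_zero]
  simp_rw [step1]
  rw [lintegral_indicator measurableSet_Ioo]
  have inner : ∀ t ∈ Ioo (0:ℝ) 1,
      (∫⁻ s in Ioo (0:ℝ) t, H (s, t)) = ENNReal.ofReal (a * t ^ n / ((n : ℝ) + 1)) := by
    intro t ht
    have ht0 : (0:ℝ) < t := ht.1
    have hint : IntegrableOn (fun s : ℝ => a * s ^ n / t) (Ioo 0 t) := by
      have hcont : Continuous (fun s : ℝ => a * s ^ n / t) :=
        (continuous_const.mul (continuous_pow n)).div_const t
      exact (hcont.integrableOn_Icc).mono_set Ioo_subset_Icc_self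
    have hnn : (fun _ : ℝ => (0:ℝ)) ≤ᵐ[volume.restrict (Ioo (0:ℝ) t)] fun s => a * s ^ n / t := by
      filter_upwards [ae_restrict_mem measurableSet_Ioo] with s hs
      exact div_nonneg (mul_nonneg ha (pow_nonneg hs.1.le n)) ht0.le
    rw [hHdef]
    rw [← ofReal_integral_eq_lintegral_ofReal hint hnn]
    congr 1
    rw [← MeasureTheory.integral_Ioc_eq_integral_Ioo,
      ← intervalIntegral.integral_of_le ht0.le]
    have : ∫ s in (0:ℝ)..t, a * s ^ n / t = (a / t) * ∫ s in (0:ℝ)..t, s ^ n := by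
      rw [← intervalIntegral.integral_const_mul]
      congr 1; funext s; ring
    have ht0' : t ≠ 0 := ht0.ne'
    rw [this, integral_pow, zero_pow (Nat.succ_ne_zero n), sub_zero, pow_succ]
    field_simp
  rw [setLIntegral_congr_fun measurableSet_Ioo inner]
  have hint2 : IntegrableOn (fun t : ℝ => a * t ^ n / ((n : ℝ) + 1)) (Ioo 0 1) :=
    (((continuous_const.mul (continuous_pow n)).div_const _).integrableOn_Icc).mono_set
      Ioo_subset_Icc_self
  have hnn2 : (fun _ : ℝ => (0:ℝ)) ≤ᵐ[volume.restrict (Ioo (0:ℝ) 1)]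
      fun t => a * t ^ n / ((n : ℝ) + 1) := by
    filter_upwards [ae_restrict_mem measurableSet_Ioo] with t htt
    exact div_nonneg (mul_nonneg ha (pow_nonneg htt.1.le n)) (by positivity)
  rw [← ofReal_integral_eq_lintegral_ofReal hint2 hnn2]
  congr 1
  rw [← MeasureTheory.integral_Ioc_eq_integral_Ioo, ← intervalIntegral.integral_of_le zero_le_one]
  have : ∫ t in (0:ℝ)..1, a * t ^ n / ((n : ℝ) + 1)
      = (a / ((n : ℝ) + 1)) * ∫ t in (0:ℝ)..1, t ^ n := by
    rw [← intervalIntegral.integral_const_mul]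
    congr 1; funext t; ring
  rw [this, integral_pow, one_pow, zero_pow (Nat.succ_ne_zero n), sub_zero,
    mul_one_div, pow_two, ← div_div]

theorem Zc2_eval (c : ℝ) (hc1 : -1 ≤ c) (hc2 : c < 1) :
    let S : Set (ℝ × ℝ) := {p | 0 < p.1 ∧ p.1 < p.2 ∧ p.2 < 1}
    let f : ℝ × ℝ → ℝ := fun p => (1 - c) / ((1 - p.1) * (1 - c * p.1)) * (1 / p.2)
    IntegrableOn f S volume ∧
      (∫ p in S, f p) = Real.pi ^ 2 / 6 - ∑' n : ℕ, c ^ (n + 1) / ((n : ℝ) + 1) ^ 2 := by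
  intro S f
  have hcabs : |c| ≤ 1 := abs_le.mpr ⟨hc1, hc2.le⟩
  have hS : MeasurableSet S := by
    apply MeasurableSet.inter (measurableSet_lt measurable_const measurable_fst)
    exact (measurableSet_lt measurable_fst measurable_snd).inter
      (measurableSet_lt measurable_snd measurable_const)
  have hA : ∀ n : ℕ, 0 ≤ 1 - c ^ (n + 1) := by
    intro n
    have : c ^ (n + 1) ≤ 1 :=
      calc c ^ (n + 1) ≤ |c ^ (n + 1)| := le_abs_self _
        _ = |c| ^ (n + 1) := abs_pow c (n + 1)
        _ ≤ 1 := pow_le_one₀ (abs_nonneg c) hcabs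
    linarith
  -- summability of the coefficient sums
  have hbasel : HasSum (fun n : ℕ => (1:ℝ) / ((n : ℝ) + 1) ^ 2) (Real.pi ^ 2 / 6) := by
    have h0 := hasSum_zeta_two
    rw [← hasSum_nat_add_iff' 1] at h0
    simpa using h0
  have h1 : Summable (fun n : ℕ => (1:ℝ) / ((n : ℝ) + 1) ^ 2) := hbasel.summable
  have h2 : Summable (fun n : ℕ => c ^ (n + 1) / ((n : ℝ) + 1) ^ 2) := by
    apply Summable.of_abs
    apply Summable.of_nonneg_of_le (fun n => abs_nonneg _) _ h1
    intro n
    have hn : (0:ℝ) < ((n : ℝ) + 1) ^ 2 := by positivity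
    rw [abs_div, abs_of_pos hn, abs_pow]
    gcongr
    exact pow_le_one₀ (abs_nonneg c) hcabs
  have hsummable : Summable (fun n : ℕ => (1 - c ^ (n + 1)) / ((n : ℝ) + 1) ^ 2) := by
    apply (h1.sub h2).congr
    intro n
    rw [sub_div]
  have hsum : ∑' n : ℕ, (1 - c ^ (n + 1)) / ((n : ℝ) + 1) ^ 2
      = Real.pi ^ 2 / 6 - ∑' n : ℕ, c ^ (n + 1) / ((n : ℝ) + 1) ^ 2 := by
    rw [← hbasel.tsum_eq, ← Summable.tsum_sub h1 h2]
    exact tsum_congr fun n => sub_div _ _ _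
  set X : ℝ := Real.pi ^ 2 / 6 - ∑' n : ℕ, c ^ (n + 1) / ((n : ℝ) + 1) ^ 2 with hXdef
  have hX0 : 0 ≤ X := by
    rw [← hsum]
    exact tsum_nonneg fun n => div_nonneg (hA n) (by positivity)
  -- nonnegativity and pointwise series on S
  have hfpos : ∀ p ∈ S, 0 ≤ f p := by
    rintro ⟨s, t⟩ ⟨hs0, hst, ht1⟩
    have hs1 : s < 1 := hst.trans ht1
    have hcs : c * s < 1 := by
      calc c * s ≤ |c * s| := le_abs_self _
        _ = |c| * |s| := abs_mul c s
        _ ≤ 1 * |s| := by gcongr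
        _ = s := by rw [one_mul, abs_of_pos hs0]
        _ < 1 := hs1
    have ht0 : 0 < t := hs0.trans hst
    apply mul_nonneg
    · apply div_nonneg (by linarith)
      apply mul_nonneg <;> linarith
    · positivity
  have hfm : Measurable f := by
    apply Measurable.mul
    · exact measurable_const.div
        ((measurable_const.sub measurable_fst).mul
          (measurable_const.sub (measurable_fst.const_mul c)))
    · exact measurable_const.div measurable_snd
  -- the pointwise tsum expansion
  have hpt : ∀ p ∈ S, ENNReal.ofReal (f p)
      = ∑' n : ℕ, ENNReal.ofReal ((1 - c ^ (n + 1)) * p.1 ^ n / p.2) := by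
    rintro ⟨s, t⟩ ⟨hs0, hst, ht1⟩
    have hs1 : s < 1 := hst.trans ht1
    have ht0 : 0 < t := hs0.trans hst
    have hsabs : |s| < 1 := by rw [abs_of_pos hs0]; exact hs1
    have hgsum : Summable (fun n : ℕ => (1 - c ^ (n + 1)) * s ^ n) := by
      have hg1 : Summable (fun n : ℕ => s ^ n) :=
        summable_geometric_of_norm_lt_one (by rwa [Real.norm_eq_abs])
      have hcs : |c * s| < 1 := by
        rw [abs_mul]
        calc |c| * |s| ≤ 1 * |s| := by gcongr
          _ = |s| := one_mul _
          _ < 1 := hsabs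
      have hg2 : Summable (fun n : ℕ => c * (c * s) ^ n) :=
        (summable_geometric_of_norm_lt_one (by rwa [Real.norm_eq_abs])).mul_left c
      apply (hg1.sub hg2).congr
      intro n; rw [mul_pow]; ring
    have hval : f (s, t) = ∑' n : ℕ, (1 - c ^ (n + 1)) * s ^ n / t := by
      rw [tsum_div_const, series_id c s hcabs hs0 hs1]
      simp [f]
      ring
    rw [hval, ENNReal.ofReal_tsum_of_nonneg]
    · intro n
      exact div_nonneg (mul_nonneg (hA n) (pow_nonneg hs0.le n)) ht0.le
    · exact hgsum.div_const t
  -- main lintegral computation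
  have hgm : ∀ n : ℕ, Measurable fun p : ℝ × ℝ =>
      ENNReal.ofReal ((1 - c ^ (n + 1)) * p.1 ^ n / p.2) := fun n =>
    (((measurable_fst.pow_const n).const_mul _).div measurable_snd).ennreal_ofReal
  have key : ∫⁻ p in S, ENNReal.ofReal (f p) = ENNReal.ofReal X := by
    calc ∫⁻ p in S, ENNReal.ofReal (f p)
        = ∫⁻ p in S, ∑' n : ℕ, ENNReal.ofReal ((1 - c ^ (n + 1)) * p.1 ^ n / p.2) := by
          apply setLIntegral_congr_fun hS hpt
      _ = ∑' n : ℕ, ∫⁻ p in S, ENNReal.ofReal ((1 - c ^ (n + 1)) * p.1 ^ n / p.2) :=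
          lintegral_tsum fun n => (hgm n).aemeasurable
      _ = ∑' n : ℕ, ENNReal.ofReal ((1 - c ^ (n + 1)) / ((n : ℝ) + 1) ^ 2) := by
          exact tsum_congr fun n => term_int _ (hA n) n
      _ = ENNReal.ofReal X := by
          rw [← ENNReal.ofReal_tsum_of_nonneg
            (fun n => div_nonneg (hA n) (by positivity)) hsummable, hsum]
  -- conclude
  have hInt : IntegrableOn f S volume := by
    constructor
    · exact (hfm.aestronglyMeasurable).restrict
    · rw [HasFiniteIntegral]
      have : ∫⁻ p in S, ‖f p‖ₑ = ∫⁻ p in S, ENNReal.ofReal (f p) := by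
        apply setLIntegral_congr_fun hS _
        intro p hp
        exact Real.enorm_eq_ofReal (hfpos p hp)
      rw [this, key]
      exact ENNReal.ofReal_lt_top
  refine ⟨hInt, ?_⟩
  rw [integral_eq_lintegral_of_nonneg_ae
    ((ae_restrict_iff' hS).mpr (ae_of_all _ hfpos))
    hfm.aestronglyMeasurable.restrict, key, ENNReal.toReal_ofReal hX0]
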